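/- Let u* ∈ L_exp^ε(ρ₁), v* ∈ L_exp^ε(ρ₂) with c bounded. The following are equivalent: (1) (u*,v*) maximizes D_ε; (2) v* = (u*)^{(c,ε)} and u* = (v*)^{(c,ε)}; (3) the measure γ* = e^{(u*(x)+v*(y)-c(x,y))/ε} ρ₁⊗ρ₂ belongs to Π(ρ₁,ρ₂); (4) OT_ε(ρ₁,ρ₂) = D_ε(u*,v*) + ε. In these cases γ* is the unique minimizer of γ ↦ ε KL(γ|K) over Π(ρ₁,ρ₂). -/

import Mathlib

open MeasureTheory Real
open scoped ENNReal NNReal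
set_option linter.unusedSectionVars false

noncomputable section

open Classical in
/-- Kullback–Leibler divergence, valued in `EReal`. -/
def KL {Z : Type*} [MeasurableSpace Z] (μ ν : Measure Z) : EReal :=
  if μ ≪ ν ∧ Integrable (fun z => Real.log (μ.rnDeriv ν z).toReal) μ
  then ((∫ z, Real.log (μ.rnDeriv ν z).toReal ∂μ : ℝ) : EReal) else ⊤

/-- `u ∈ L_exp^ε(ρ)`. -/
def Lexp {Z : Type*} [MeasurableSpace Z] (ε : ℝ) (ρ : Measure Z) (u : Z → ℝ) : Prop :=
  Measurable u ∧ Integrable (fun z => Real.exp (u z / ε)) ρ ∧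
    0 < ∫ z, Real.exp (u z / ε) ∂ρ

open Classical in
/-- The dual Entropy–Kantorovich functional, valued in `EReal`. -/
def Dext {X Y : Type*} [MeasurableSpace X] [MeasurableSpace Y]
    (ρ₁ : Measure X) (ρ₂ : Measure Y) (c : X → Y → ℝ) (ε : ℝ)
    (u : X → ℝ) (v : Y → ℝ) : EReal :=
  if Integrable u ρ₁ ∧ Integrable v ρ₂ ∧
      Integrable (fun p : X × Y => Real.exp ((u p.1 + v p.2 - c p.1 p.2) / ε)) (ρ₁.prod ρ₂)
  then (((∫ x, u x ∂ρ₁) + (∫ y, v y ∂ρ₂)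
    - ε * ∫ p, Real.exp ((u p.1 + v p.2 - c p.1 p.2) / ε) ∂(ρ₁.prod ρ₂) : ℝ) : EReal)
  else ⊥

/-- Couplings of `ρ₁` and `ρ₂`. -/
def Coupling {X Y : Type*} [MeasurableSpace X] [MeasurableSpace Y]
    (ρ₁ : Measure X) (ρ₂ : Measure Y) (γ : Measure (X × Y)) : Prop :=
  IsProbabilityMeasure γ ∧ γ.map Prod.fst = ρ₁ ∧ γ.map Prod.snd = ρ₂

/-- The entropic `(c,ε)`-transform of `u : X → ℝ`. -/
def transform {X Y : Type*} [MeasurableSpace X] (ρ₁ : Measure X)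
    (c : X → Y → ℝ) (ε : ℝ) (u : X → ℝ) : Y → ℝ :=
  fun y => -ε * Real.log (∫ x, Real.exp ((u x - c x y) / ε) ∂ρ₁)

/-- The entropic `(c,ε)`-transform of `v : Y → ℝ`. -/
def transformY {X Y : Type*} [MeasurableSpace Y] (ρ₂ : Measure Y)
    (c : X → Y → ℝ) (ε : ℝ) (v : Y → ℝ) : X → ℝ :=
  fun x => -ε * Real.log (∫ y, Real.exp ((v y - c x y) / ε) ∂ρ₂)


/-! ### Auxiliary lemmas -/

section PointwiseAux

lemma key_ineq {a : ℝ} (b : ℝ) (ha : 0 ≤ a) :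
    a - Real.exp b ≤ a * Real.log a - a * b := by
  rcases eq_or_lt_of_le ha with h0 | h0
  · rw [← h0]; simp [(Real.exp_pos b).le]
  · have h := Real.add_one_le_exp (b - Real.log a)
    have he : Real.exp (b - Real.log a) = Real.exp b / a := by
      rw [Real.exp_sub, Real.exp_log h0]
    rw [he] at h
    have h2 := mul_le_mul_of_nonneg_left h ha
    rw [mul_div_cancel₀ _ h0.ne'] at h2
    nlinarith

lemma key_eq {a b : ℝ} (ha : 0 ≤ a) (h : a * Real.log a - a * b = a - Real.exp b) :
    a = Real.exp b := by
  rcases eq_or_lt_of_le ha with h0 | h0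
  · exfalso
    rw [← h0] at h
    simp at h
    try exact (Real.exp_pos b).ne' h.symm
    try exact (Real.exp_pos b).ne' h
    try linarith [Real.exp_pos b]
  · by_contra hne
    have hb : b - Real.log a ≠ 0 := by
      intro h'
      apply hne
      have : b = Real.log a := by linarith
      rw [this, Real.exp_log h0]
    have h1 := Real.add_one_lt_exp hb
    have he : Real.exp (b - Real.log a) = Real.exp b / a := by
      rw [Real.exp_sub, Real.exp_log h0]
    rw [he] at h1
    have h2 := mul_lt_mul_of_pos_left h1 h0
    rw [mul_div_cancel₀ _ h0.ne'] at h2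
    nlinarith

end PointwiseAux

section MainAux

variable {X Y : Type*} [MeasurableSpace X] [MeasurableSpace Y]
  {ρ₁ : Measure X} {ρ₂ : Measure Y} [IsProbabilityMeasure ρ₁] [IsProbabilityMeasure ρ₂]
  {ε : ℝ} {c : X → Y → ℝ} {M : ℝ} {u : X → ℝ} {v : Y → ℝ}

lemma measurable_cy (hc : Measurable (Function.uncurry c)) (y : Y) :
    Measurable fun x => c x y :=
  hc.comp measurable_prodMk_right

lemma measurable_cx (hc : Measurable (Function.uncurry c)) (x : X) :
    Measurable fun y => c x y :=
  hc.comp measurable_prodMk_left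

lemma integrable_inner (hε : 0 < ε) (hc : Measurable (Function.uncurry c))
    (hM : ∀ x y, |c x y| ≤ M) (hu : Lexp ε ρ₁ u) (y : Y) :
    Integrable (fun x => Real.exp ((u x - c x y) / ε)) ρ₁ := by
  refine Integrable.mono' (hu.2.1.const_mul (Real.exp (M / ε)))
    ((Real.measurable_exp.comp ((hu.1.sub (measurable_cy hc y)).div_const ε)).aestronglyMeasurable)
    (Filter.Eventually.of_forall fun x => ?_)
  rw [Real.norm_eq_abs, abs_of_nonneg (Real.exp_nonneg _), ← Real.exp_add]
  apply Real.exp_le_exp.2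
  have := (abs_le.1 (hM x y)).1
  rw [← add_div, div_le_div_iff_of_pos_right hε]
  linarith

lemma inner_ge (hε : 0 < ε) (hc : Measurable (Function.uncurry c))
    (hM : ∀ x y, |c x y| ≤ M) (hu : Lexp ε ρ₁ u) (y : Y) :
    Real.exp (-M / ε) * ∫ x, Real.exp (u x / ε) ∂ρ₁
      ≤ ∫ x, Real.exp ((u x - c x y) / ε) ∂ρ₁ := by
  rw [← integral_const_mul]
  refine integral_mono (hu.2.1.const_mul _) (integrable_inner hε hc hM hu y) fun x => ?_
  rw [← Real.exp_add]
  apply Real.exp_le_exp.2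
  have := (abs_le.1 (hM x y)).2
  rw [← add_div, div_le_div_iff_of_pos_right hε]
  linarith

lemma inner_le (hε : 0 < ε) (hc : Measurable (Function.uncurry c))
    (hM : ∀ x y, |c x y| ≤ M) (hu : Lexp ε ρ₁ u) (y : Y) :
    ∫ x, Real.exp ((u x - c x y) / ε) ∂ρ₁
      ≤ Real.exp (M / ε) * ∫ x, Real.exp (u x / ε) ∂ρ₁ := by
  rw [← integral_const_mul]
  refine integral_mono (integrable_inner hε hc hM hu y) (hu.2.1.const_mul _) fun x => ?_
  rw [← Real.exp_add]
  apply Real.exp_le_exp.2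
  have := (abs_le.1 (hM x y)).1
  rw [← add_div, div_le_div_iff_of_pos_right hε]
  linarith

lemma inner_pos (hε : 0 < ε) (hc : Measurable (Function.uncurry c))
    (hM : ∀ x y, |c x y| ≤ M) (hu : Lexp ε ρ₁ u) (y : Y) :
    0 < ∫ x, Real.exp ((u x - c x y) / ε) ∂ρ₁ :=
  lt_of_lt_of_le (mul_pos (Real.exp_pos _) hu.2.2) (inner_ge hε hc hM hu y)

lemma transform_exp (hε : 0 < ε) (hc : Measurable (Function.uncurry c))
    (hM : ∀ x y, |c x y| ≤ M) (hu : Lexp ε ρ₁ u) (y : Y) :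
    Real.exp (-(transform ρ₁ c ε u y) / ε) = ∫ x, Real.exp ((u x - c x y) / ε) ∂ρ₁ := by
  unfold transform
  rw [show -(-ε * Real.log (∫ x, Real.exp ((u x - c x y) / ε) ∂ρ₁)) / ε
      = Real.log (∫ x, Real.exp ((u x - c x y) / ε) ∂ρ₁) by field_simp]
  exact Real.exp_log (inner_pos hε hc hM hu y)


lemma transform_abs_le (hε : 0 < ε) (hc : Measurable (Function.uncurry c))
    (hM : ∀ x y, |c x y| ≤ M) (hu : Lexp ε ρ₁ u) (y : Y) :
    |transform ρ₁ c ε u y| ≤ ε * |Real.log (∫ x, Real.exp (u x / ε) ∂ρ₁)| + M := by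
  have hIpos : 0 < ∫ x, Real.exp ((u x - c x y) / ε) ∂ρ₁ := inner_pos hε hc hM hu y
  have hIu : 0 < ∫ x, Real.exp (u x / ε) ∂ρ₁ := hu.2.2
  have h1 : Real.log (∫ x, Real.exp (u x / ε) ∂ρ₁) - M / ε
      ≤ Real.log (∫ x, Real.exp ((u x - c x y) / ε) ∂ρ₁) := by
    have := Real.log_le_log (mul_pos (Real.exp_pos _) hIu) (inner_ge hε hc hM hu y)
    rw [Real.log_mul (Real.exp_pos _).ne' hIu.ne', Real.log_exp, neg_div] at this
    linarith
  have h2 : Real.log (∫ x, Real.exp ((u x - c x y) / ε) ∂ρ₁)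
      ≤ Real.log (∫ x, Real.exp (u x / ε) ∂ρ₁) + M / ε := by
    have := Real.log_le_log hIpos (inner_le hε hc hM hu y)
    rwa [Real.log_mul (Real.exp_pos _).ne' hIu.ne', Real.log_exp, add_comm] at this
  have habs : |Real.log (∫ x, Real.exp ((u x - c x y) / ε) ∂ρ₁)|
      ≤ |Real.log (∫ x, Real.exp (u x / ε) ∂ρ₁)| + M / ε := by
    rw [abs_le]
    constructor
    · have := neg_abs_le (Real.log (∫ x, Real.exp (u x / ε) ∂ρ₁))
      linarith
    · have := le_abs_self (Real.log (∫ x, Real.exp (u x / ε) ∂ρ₁))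
      linarith
  show |(-ε) * Real.log (∫ x, Real.exp ((u x - c x y) / ε) ∂ρ₁)| ≤ _
  rw [abs_mul, abs_neg, abs_of_pos hε]
  have := mul_le_mul_of_nonneg_left habs hε.le
  rw [mul_add, mul_div_cancel₀ _ hε.ne'] at this
  linarith

lemma transform_measurable (hu : Measurable u) (hc : Measurable (Function.uncurry c)) :
    Measurable (transform ρ₁ c ε u) := by
  have hm : StronglyMeasurable fun p : X × Y => Real.exp ((u p.1 - c p.1 p.2) / ε) :=
    (Real.measurable_exp.comp (((hu.comp measurable_fst).sub hc).div_const ε)).stronglyMeasurable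
  have h2 := (hm.integral_prod_left' (μ := ρ₁)).measurable
  exact (Real.measurable_log.comp h2).const_mul (-ε)

lemma transform_integrable (hε : 0 < ε) (hc : Measurable (Function.uncurry c))
    (hM : ∀ x y, |c x y| ≤ M) (hu : Lexp ε ρ₁ u) :
    Integrable (transform ρ₁ c ε u) ρ₂ := by
  refine Integrable.mono' (integrable_const (ε * |Real.log (∫ x, Real.exp (u x / ε) ∂ρ₁)| + M))
    (transform_measurable hu.1 hc).aestronglyMeasurable
    (Filter.Eventually.of_forall fun y => ?_)
  rw [Real.norm_eq_abs]
  exact transform_abs_le hε hc hM hu y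

lemma transform_lexp (hε : 0 < ε) (hc : Measurable (Function.uncurry c))
    (hM : ∀ x y, |c x y| ≤ M) (hu : Lexp ε ρ₁ u) :
    Lexp ε ρ₂ (transform ρ₁ c ε u) := by
  set B := ε * |Real.log (∫ x, Real.exp (u x / ε) ∂ρ₁)| + M with hB
  have hbd := transform_abs_le hε hc hM hu
  have hmeas : Measurable fun y => Real.exp (transform ρ₁ c ε u y / ε) :=
    Real.measurable_exp.comp ((transform_measurable hu.1 hc).div_const ε)
  have hint : Integrable (fun y => Real.exp (transform ρ₁ c ε u y / ε)) ρ₂ := by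
    refine Integrable.mono' (integrable_const (Real.exp (B / ε)))
      hmeas.aestronglyMeasurable (Filter.Eventually.of_forall fun y => ?_)
    rw [Real.norm_eq_abs, abs_of_nonneg (Real.exp_nonneg _)]
    exact Real.exp_le_exp.2 (div_le_div_of_nonneg_right ((abs_le.1 (hbd y)).2) hε.le)
  refine ⟨transform_measurable hu.1 hc, hint, ?_⟩
  have : (0 : ℝ) < Real.exp (-B / ε) := Real.exp_pos _
  calc (0:ℝ) < Real.exp (-B / ε) := this
    _ = ∫ _, Real.exp (-B / ε) ∂ρ₂ := by simp
    _ ≤ ∫ y, Real.exp (transform ρ₁ c ε u y / ε) ∂ρ₂ := by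
        refine integral_mono (integrable_const _) hint fun y => ?_
        exact Real.exp_le_exp.2 (div_le_div_of_nonneg_right ((abs_le.1 (hbd y)).1) hε.le)

lemma prod_exp_integrable (hε : 0 < ε) (hc : Measurable (Function.uncurry c))
    (hM : ∀ x y, |c x y| ≤ M) (hu : Lexp ε ρ₁ u) (hv : Lexp ε ρ₂ v) :
    Integrable (fun p : X × Y => Real.exp ((u p.1 + v p.2 - c p.1 p.2) / ε)) (ρ₁.prod ρ₂) := by
  have hmeas : Measurable fun p : X × Y => Real.exp ((u p.1 + v p.2 - c p.1 p.2) / ε) :=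
    Real.measurable_exp.comp
      ((((hu.1.comp measurable_fst).add (hv.1.comp measurable_snd)).sub hc).div_const ε)
  refine Integrable.mono' (((hu.2.1.mul_prod hv.2.1)).const_mul (Real.exp (M / ε)))
    hmeas.aestronglyMeasurable (Filter.Eventually.of_forall fun p => ?_)
  rw [Real.norm_eq_abs, abs_of_nonneg (Real.exp_nonneg _), ← Real.exp_add, ← Real.exp_add]
  apply Real.exp_le_exp.2
  have := (abs_le.1 (hM p.1 p.2)).1
  have h1 : M / ε + (u p.1 / ε + v p.2 / ε) = (M + (u p.1 + v p.2)) / ε := by ring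
  rw [h1, div_le_div_iff_of_pos_right hε]
  linarith

lemma fubini_exp (hε : 0 < ε) (hc : Measurable (Function.uncurry c))
    (hM : ∀ x y, |c x y| ≤ M) (hu : Lexp ε ρ₁ u) (hv : Lexp ε ρ₂ v) :
    ∫ p : X × Y, Real.exp ((u p.1 + v p.2 - c p.1 p.2) / ε) ∂(ρ₁.prod ρ₂)
      = ∫ y, Real.exp ((v y - transform ρ₁ c ε u y) / ε) ∂ρ₂ := by
  rw [integral_prod_symm _ (prod_exp_integrable hε hc hM hu hv)]
  refine integral_congr_ae (Filter.Eventually.of_forall fun y => ?_)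
  have hsplit : ∀ x, Real.exp ((u x + v y - c x y) / ε)
      = Real.exp (v y / ε) * Real.exp ((u x - c x y) / ε) := fun x => by
    rw [← Real.exp_add]; congr 1; field_simp; ring
  simp_rw [hsplit]
  rw [integral_const_mul, ← transform_exp hε hc hM hu y, ← Real.exp_add]
  congr 1
  field_simp
  ring

lemma exp_sub_transform_integrable (hε : 0 < ε) (hc : Measurable (Function.uncurry c))
    (hM : ∀ x y, |c x y| ≤ M) (hu : Lexp ε ρ₁ u) (hv : Lexp ε ρ₂ v) :
    Integrable (fun y => Real.exp ((v y - transform ρ₁ c ε u y) / ε)) ρ₂ := by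
  have hmeas : Measurable fun y => Real.exp ((v y - transform ρ₁ c ε u y) / ε) :=
    Real.measurable_exp.comp ((hv.1.sub (transform_measurable hu.1 hc)).div_const ε)
  refine Integrable.mono'
    (hv.2.1.const_mul (Real.exp (M / ε) * ∫ x, Real.exp (u x / ε) ∂ρ₁))
    hmeas.aestronglyMeasurable (Filter.Eventually.of_forall fun y => ?_)
  rw [Real.norm_eq_abs, abs_of_nonneg (Real.exp_nonneg _)]
  have hsplit : Real.exp ((v y - transform ρ₁ c ε u y) / ε)
      = Real.exp (-transform ρ₁ c ε u y / ε) * Real.exp (v y / ε) := by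
    rw [← Real.exp_add]; congr 1; field_simp; ring
  rw [hsplit, transform_exp hε hc hM hu y]
  exact mul_le_mul_of_nonneg_right (inner_le hε hc hM hu y) (Real.exp_nonneg _)



lemma Dext_eq (hcond : Integrable u ρ₁ ∧ Integrable v ρ₂ ∧
      Integrable (fun p : X × Y => Real.exp ((u p.1 + v p.2 - c p.1 p.2) / ε)) (ρ₁.prod ρ₂)) :
    Dext ρ₁ ρ₂ c ε u v = (((∫ x, u x ∂ρ₁) + (∫ y, v y ∂ρ₂)
      - ε * ∫ p : X × Y, Real.exp ((u p.1 + v p.2 - c p.1 p.2) / ε) ∂(ρ₁.prod ρ₂) : ℝ) : EReal) := by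
  unfold Dext
  rw [if_pos hcond]

lemma Dext_bot (hcond : ¬ (Integrable u ρ₁ ∧ Integrable v ρ₂ ∧
      Integrable (fun p : X × Y => Real.exp ((u p.1 + v p.2 - c p.1 p.2) / ε)) (ρ₁.prod ρ₂))) :
    Dext ρ₁ ρ₂ c ε u v = ⊥ := by
  unfold Dext
  rw [if_neg hcond]

lemma Dext_transform (hε : 0 < ε) (hc : Measurable (Function.uncurry c))
    (hM : ∀ x y, |c x y| ≤ M) (hu : Lexp ε ρ₁ u) (hui : Integrable u ρ₁) :
    Dext ρ₁ ρ₂ c ε u (transform ρ₁ c ε u)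
      = ((∫ x, u x ∂ρ₁ + ∫ y, transform ρ₁ c ε u y ∂ρ₂ - ε : ℝ) : EReal) := by
  have hT := transform_lexp (ρ₂ := ρ₂) hε hc hM hu
  rw [Dext_eq ⟨hui, transform_integrable hε hc hM hu, prod_exp_integrable hε hc hM hu hT⟩]
  have h1 : ∫ p : X × Y, Real.exp ((u p.1 + transform ρ₁ c ε u p.2 - c p.1 p.2) / ε)
      ∂(ρ₁.prod ρ₂) = 1 := by
    rw [fubini_exp hε hc hM hu hT]
    simp
  rw [h1, mul_one]

lemma sinkhorn_improve (hε : 0 < ε) (hc : Measurable (Function.uncurry c))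
    (hM : ∀ x y, |c x y| ≤ M) (hu : Lexp ε ρ₁ u) (hui : Integrable u ρ₁) (hv : Lexp ε ρ₂ v) :
    Dext ρ₁ ρ₂ c ε u v ≤ Dext ρ₁ ρ₂ c ε u (transform ρ₁ c ε u)
    ∧ (Dext ρ₁ ρ₂ c ε u v = Dext ρ₁ ρ₂ c ε u (transform ρ₁ c ε u)
        → v =ᵐ[ρ₂] transform ρ₁ c ε u) := by
  by_cases hvi : Integrable v ρ₂
  case neg =>
    have hbot : Dext ρ₁ ρ₂ c ε u v = ⊥ := Dext_bot (by tauto)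
    rw [hbot, Dext_transform hε hc hM hu hui]
    exact ⟨bot_le, fun h => absurd h.symm (EReal.coe_ne_bot _)⟩
  case pos =>
    have hTi : Integrable (transform ρ₁ c ε u) ρ₂ := transform_integrable hε hc hM hu
    have hsint : Integrable (fun y => v y - transform ρ₁ c ε u y) ρ₂ := hvi.sub hTi
    have hexpint : Integrable (fun y => Real.exp ((v y - transform ρ₁ c ε u y) / ε)) ρ₂ :=
      exp_sub_transform_integrable hε hc hM hu hv
    have hval : Dext ρ₁ ρ₂ c ε u v = ((∫ x, u x ∂ρ₁ + ∫ y, v y ∂ρ₂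
        - ε * ∫ y, Real.exp ((v y - transform ρ₁ c ε u y) / ε) ∂ρ₂ : ℝ) : EReal) := by
      rw [Dext_eq ⟨hui, hvi, prod_exp_integrable hε hc hM hu hv⟩, fubini_exp hε hc hM hu hv]
    have hD : ∀ y, 0 ≤ ε * (Real.exp ((v y - transform ρ₁ c ε u y) / ε) - 1)
        - (v y - transform ρ₁ c ε u y) := fun y => by
      have h := Real.add_one_le_exp ((v y - transform ρ₁ c ε u y) / ε)
      have h2 := mul_le_mul_of_nonneg_left h hε.le
      have h3 : ε * ((v y - transform ρ₁ c ε u y) / ε) = v y - transform ρ₁ c ε u y := by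
        field_simp
      rw [mul_add, h3] at h2
      nlinarith
    have hDint : Integrable (fun y => ε * (Real.exp ((v y - transform ρ₁ c ε u y) / ε) - 1)
        - (v y - transform ρ₁ c ε u y)) ρ₂ :=
      ((hexpint.sub (integrable_const 1)).const_mul ε).sub hsint
    have hsplit : ∫ y, (ε * (Real.exp ((v y - transform ρ₁ c ε u y) / ε) - 1)
        - (v y - transform ρ₁ c ε u y)) ∂ρ₂
        = ε * ((∫ y, Real.exp ((v y - transform ρ₁ c ε u y) / ε) ∂ρ₂) - 1)
          - ((∫ y, v y ∂ρ₂) - ∫ y, transform ρ₁ c ε u y ∂ρ₂) := by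
      have e1 : Integrable (fun y => ε * (Real.exp ((v y - transform ρ₁ c ε u y) / ε) - 1)) ρ₂ :=
        (hexpint.sub (integrable_const 1)).const_mul ε
      rw [integral_sub e1 hsint, integral_const_mul,
        integral_sub hexpint (integrable_const 1), integral_sub hvi hTi]
      simp
    have h0 : 0 ≤ ∫ y, (ε * (Real.exp ((v y - transform ρ₁ c ε u y) / ε) - 1)
        - (v y - transform ρ₁ c ε u y)) ∂ρ₂ := integral_nonneg hD
    constructor
    · rw [hval, Dext_transform hε hc hM hu hui]
      rw [hsplit] at h0
      exact EReal.coe_le_coe_iff.2 (by nlinarith)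
    · intro heq
      rw [hval, Dext_transform hε hc hM hu hui] at heq
      have heqr := EReal.coe_eq_coe_iff.1 heq
      have hint0 : ∫ y, (ε * (Real.exp ((v y - transform ρ₁ c ε u y) / ε) - 1)
          - (v y - transform ρ₁ c ε u y)) ∂ρ₂ = 0 := by
        rw [hsplit]; nlinarith
      have hae := (integral_eq_zero_iff_of_nonneg_ae
        (Filter.Eventually.of_forall hD) hDint).1 hint0
      filter_upwards [hae] with y hy
      simp only [Pi.zero_apply] at hy
      have hs : v y - transform ρ₁ c ε u y = 0 := by
        by_contra hs
        have hs' : (v y - transform ρ₁ c ε u y) / ε ≠ 0 := div_ne_zero hs hε.ne'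
        have h1 := Real.add_one_lt_exp hs'
        have h2 := mul_lt_mul_of_pos_left h1 hε
        have h3 : ε * ((v y - transform ρ₁ c ε u y) / ε) = v y - transform ρ₁ c ε u y := by
          field_simp
        rw [mul_add, h3] at h2
        nlinarith
      linarith

lemma Dext_symm :
    Dext ρ₁ ρ₂ c ε u v = Dext ρ₂ ρ₁ (fun y x => c x y) ε v u := by
  have hswap : ∀ (h3 : Integrable (fun p : X × Y =>
        Real.exp ((u p.1 + v p.2 - c p.1 p.2) / ε)) (ρ₁.prod ρ₂)),
      Integrable (fun q : Y × X => Real.exp ((v q.1 + u q.2 - c q.2 q.1) / ε)) (ρ₂.prod ρ₁) :=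
    fun h3 => h3.swap.congr (Filter.Eventually.of_forall fun q => by
      simp only [Function.comp, Prod.fst_swap, Prod.snd_swap]
      congr 1
      ring)
  have hswap' : ∀ (h3 : Integrable (fun q : Y × X =>
        Real.exp ((v q.1 + u q.2 - c q.2 q.1) / ε)) (ρ₂.prod ρ₁)),
      Integrable (fun p : X × Y => Real.exp ((u p.1 + v p.2 - c p.1 p.2) / ε)) (ρ₁.prod ρ₂) :=
    fun h3 => h3.swap.congr (Filter.Eventually.of_forall fun p => by
      simp only [Function.comp, Prod.fst_swap, Prod.snd_swap]
      congr 1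
      ring)
  have hintswap : ∫ q : Y × X, Real.exp ((v q.1 + u q.2 - c q.2 q.1) / ε) ∂(ρ₂.prod ρ₁)
      = ∫ p : X × Y, Real.exp ((u p.1 + v p.2 - c p.1 p.2) / ε) ∂(ρ₁.prod ρ₂) := by
    rw [← integral_prod_swap (fun p : X × Y => Real.exp ((u p.1 + v p.2 - c p.1 p.2) / ε))]
    exact integral_congr_ae (Filter.Eventually.of_forall fun q => by
      simp only [Prod.fst_swap, Prod.snd_swap]
      congr 1
      ring)
  unfold Dext
  by_cases h : Integrable u ρ₁ ∧ Integrable v ρ₂ ∧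
      Integrable (fun p : X × Y => Real.exp ((u p.1 + v p.2 - c p.1 p.2) / ε)) (ρ₁.prod ρ₂)
  · rw [if_pos h, if_pos ⟨h.2.1, h.1, hswap h.2.2⟩]
    rw [hintswap]
    norm_cast
    ring
  · rw [if_neg h, if_neg (fun h' => h ⟨h'.2.1, h'.1, hswap' h'.2.2⟩)]

lemma transformY_eq : transformY ρ₂ c ε v = transform ρ₂ (fun y x => c x y) ε v := rfl

lemma measurable_uncurry_flip (hc : Measurable (Function.uncurry c)) :
    Measurable (Function.uncurry fun y x => c x y) :=
  hc.comp measurable_swap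



lemma map_snd_withDensity {f : X × Y → ℝ≥0∞} (hf : Measurable f) :
    ((ρ₁.prod ρ₂).withDensity f).map Prod.snd
      = ρ₂.withDensity fun y => ∫⁻ x, f (x, y) ∂ρ₁ := by
  ext s hs
  rw [Measure.map_apply measurable_snd hs, withDensity_apply _ (measurable_snd hs),
    withDensity_apply _ hs]
  have hpre : (Prod.snd ⁻¹' s : Set (X × Y)) = Set.univ ×ˢ s := by ext p; simp
  rw [hpre, ← Measure.prod_restrict, Measure.restrict_univ,
    lintegral_prod_symm' _ hf]

lemma map_fst_withDensity {f : X × Y → ℝ≥0∞} (hf : Measurable f) :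
    ((ρ₁.prod ρ₂).withDensity f).map Prod.fst
      = ρ₁.withDensity fun x => ∫⁻ y, f (x, y) ∂ρ₂ := by
  ext s hs
  rw [Measure.map_apply measurable_fst hs, withDensity_apply _ (measurable_fst hs),
    withDensity_apply _ hs]
  have hpre : (Prod.fst ⁻¹' s : Set (X × Y)) = s ×ˢ Set.univ := by ext p; simp
  rw [hpre, ← Measure.prod_restrict, Measure.restrict_univ,
    lintegral_prod _ hf.aemeasurable]

lemma integrable_inner' (hε : 0 < ε) (hc : Measurable (Function.uncurry c))
    (hM : ∀ x y, |c x y| ≤ M) (hu : Lexp ε ρ₁ u) (y : Y) :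
    Integrable (fun x => Real.exp ((u x + v y - c x y) / ε)) ρ₁ :=
  ((integrable_inner hε hc hM hu y).const_mul (Real.exp (v y / ε))).congr
    (Filter.Eventually.of_forall fun x => by
      show Real.exp (v y / ε) * Real.exp ((u x - c x y) / ε)
        = Real.exp ((u x + v y - c x y) / ε)
      rw [← Real.exp_add]; congr 1; field_simp; ring)

lemma inner_eq (hε : 0 < ε) (hc : Measurable (Function.uncurry c))
    (hM : ∀ x y, |c x y| ≤ M) (hu : Lexp ε ρ₁ u) (y : Y) :
    ∫ x, Real.exp ((u x + v y - c x y) / ε) ∂ρ₁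
      = Real.exp ((v y - transform ρ₁ c ε u y) / ε) := by
  have hsplit : ∀ x, Real.exp ((u x + v y - c x y) / ε)
      = Real.exp (v y / ε) * Real.exp ((u x - c x y) / ε) := fun x => by
    rw [← Real.exp_add]; congr 1; field_simp; ring
  simp_rw [hsplit]
  rw [integral_const_mul, ← transform_exp hε hc hM hu y, ← Real.exp_add]
  congr 1
  field_simp
  ring

lemma lintegral_inner_snd (hε : 0 < ε) (hc : Measurable (Function.uncurry c))
    (hM : ∀ x y, |c x y| ≤ M) (hu : Lexp ε ρ₁ u) (y : Y) :
    ∫⁻ x, ENNReal.ofReal (Real.exp ((u x + v y - c x y) / ε)) ∂ρ₁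
      = ENNReal.ofReal (Real.exp ((v y - transform ρ₁ c ε u y) / ε)) := by
  rw [← ofReal_integral_eq_lintegral_ofReal (integrable_inner' hε hc hM hu y)
    (Filter.Eventually.of_forall fun x => Real.exp_nonneg _)]
  rw [inner_eq hε hc hM hu y]

lemma withDensity_eq_self {Z : Type*} [MeasurableSpace Z] {ρ : Measure Z} [SigmaFinite ρ]
    {d : Z → ℝ≥0∞} (hd : Measurable d) (h : ρ.withDensity d = ρ) : d =ᵐ[ρ] 1 := by
  have h1 := Measure.rnDeriv_withDensity ρ hd
  rw [h] at h1
  exact h1.symm.trans (Measure.rnDeriv_self ρ)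

lemma integral_withDensity_toReal {Z : Type*} [MeasurableSpace Z] {ρ : Measure Z}
    {d : Z → ℝ≥0∞} (hd : AEMeasurable d ρ) (hfin : ∀ᵐ z ∂ρ, d z < ∞) (φ : Z → ℝ) :
    ∫ z, φ z ∂(ρ.withDensity d) = ∫ z, (d z).toReal * φ z ∂ρ := by
  have hcongr : ρ.withDensity d = ρ.withDensity (fun z => ((d z).toNNReal : ℝ≥0∞)) :=
    withDensity_congr_ae (hfin.mono fun z hz => (ENNReal.coe_toNNReal hz.ne).symm)
  rw [hcongr, integral_withDensity_eq_integral_smul₀ hd.ennreal_toNNReal φ]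
  refine integral_congr_ae (Filter.Eventually.of_forall fun z => ?_)
  simp [NNReal.smul_def, ENNReal.toReal]

lemma integrable_withDensity_toReal {Z : Type*} [MeasurableSpace Z] {ρ : Measure Z}
    {d : Z → ℝ≥0∞} (hd : AEMeasurable d ρ) (hfin : ∀ᵐ z ∂ρ, d z < ∞) {φ : Z → ℝ} :
    Integrable φ (ρ.withDensity d) ↔ Integrable (fun z => (d z).toReal * φ z) ρ := by
  have hcongr : ρ.withDensity d = ρ.withDensity (fun z => ((d z).toNNReal : ℝ≥0∞)) :=
    withDensity_congr_ae (hfin.mono fun z hz => (ENNReal.coe_toNNReal hz.ne).symm)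
  rw [hcongr, integrable_withDensity_iff_integrable_smul₀ hd.ennreal_toNNReal]
  constructor <;> intro h <;> refine h.congr (Filter.Eventually.of_forall fun z => ?_) <;>
    simp [NNReal.smul_def, ENNReal.toReal]

lemma K_isFiniteMeasure (hε : 0 < ε) (hM : ∀ x y, |c x y| ≤ M) :
    IsFiniteMeasure ((ρ₁.prod ρ₂).withDensity
      (fun p => ENNReal.ofReal (Real.exp (-c p.1 p.2 / ε)))) := by
  apply isFiniteMeasure_withDensity
  have hb : ∫⁻ p, ENNReal.ofReal (Real.exp (-c p.1 p.2 / ε)) ∂(ρ₁.prod ρ₂)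
      ≤ ∫⁻ _, ENNReal.ofReal (Real.exp (M / ε)) ∂(ρ₁.prod ρ₂) := by
    refine lintegral_mono fun p => ENNReal.ofReal_le_ofReal (Real.exp_le_exp.2 ?_)
    have := (abs_le.1 (hM p.1 p.2)).1
    rw [div_le_div_iff_of_pos_right hε]
    linarith
  refine ne_top_of_le_ne_top ?_ hb
  rw [lintegral_const]
  exact ENNReal.mul_ne_top ENNReal.ofReal_ne_top (measure_ne_top _ _)



lemma gibbs {Z : Type*} [MeasurableSpace Z] {μt : Measure Z} [IsFiniteMeasure μt]
    {γ : Measure Z} [IsProbabilityMeasure γ] (hac : γ ≪ μt)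
    {ψ : Z → ℝ} (hψγ : Integrable ψ γ)
    (hexp : Integrable (fun z => Real.exp (ψ z)) μt)
    (hlog : Integrable (fun z => Real.log ((γ.rnDeriv μt z).toReal)) γ) :
    (∫ z, ψ z ∂γ) + 1 - (∫ z, Real.exp (ψ z) ∂μt)
        ≤ ∫ z, Real.log ((γ.rnDeriv μt z).toReal) ∂γ
    ∧ ((∫ z, Real.log ((γ.rnDeriv μt z).toReal) ∂γ)
          = (∫ z, ψ z ∂γ) + 1 - (∫ z, Real.exp (ψ z) ∂μt)
        → γ.rnDeriv μt =ᵐ[μt] fun z => ENNReal.ofReal (Real.exp (ψ z))) := by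
  have hdm : Measurable (γ.rnDeriv μt) := Measure.measurable_rnDeriv γ μt
  have hfin : ∀ᵐ z ∂μt, γ.rnDeriv μt z < ∞ := Measure.rnDeriv_lt_top γ μt
  have hwd : μt.withDensity (γ.rnDeriv μt) = γ := Measure.withDensity_rnDeriv_eq γ μt hac
  have hlint : ∫⁻ z, γ.rnDeriv μt z ∂μt = 1 := by
    rw [Measure.lintegral_rnDeriv hac]; simp
  have hai : Integrable (fun z => (γ.rnDeriv μt z).toReal) μt :=
    integrable_toReal_of_lintegral_ne_top hdm.aemeasurable (by rw [hlint]; simp)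
  have haint : ∫ z, (γ.rnDeriv μt z).toReal ∂μt = 1 := by
    rw [integral_toReal hdm.aemeasurable hfin, hlint]; simp
  have h1 : ∫ z, Real.log ((γ.rnDeriv μt z).toReal) ∂γ
      = ∫ z, (γ.rnDeriv μt z).toReal * Real.log ((γ.rnDeriv μt z).toReal) ∂μt := by
    have := integral_withDensity_toReal hdm.aemeasurable hfin
      (fun z => Real.log ((γ.rnDeriv μt z).toReal))
    rwa [hwd] at this
  have h1i : Integrable
      (fun z => (γ.rnDeriv μt z).toReal * Real.log ((γ.rnDeriv μt z).toReal)) μt := by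
    rw [← integrable_withDensity_toReal hdm.aemeasurable hfin, hwd]; exact hlog
  have h2 : ∫ z, ψ z ∂γ = ∫ z, (γ.rnDeriv μt z).toReal * ψ z ∂μt := by
    have := integral_withDensity_toReal hdm.aemeasurable hfin ψ
    rwa [hwd] at this
  have h2i : Integrable (fun z => (γ.rnDeriv μt z).toReal * ψ z) μt := by
    rw [← integrable_withDensity_toReal hdm.aemeasurable hfin, hwd]; exact hψγ
  have hFnn : ∀ z, 0 ≤ (γ.rnDeriv μt z).toReal * Real.log ((γ.rnDeriv μt z).toReal)
      - (γ.rnDeriv μt z).toReal * ψ z - (γ.rnDeriv μt z).toReal + Real.exp (ψ z) := fun z => by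
    have := key_ineq (a := (γ.rnDeriv μt z).toReal) (ψ z) ENNReal.toReal_nonneg
    linarith
  have hFi : Integrable (fun z => (γ.rnDeriv μt z).toReal * Real.log ((γ.rnDeriv μt z).toReal)
      - (γ.rnDeriv μt z).toReal * ψ z - (γ.rnDeriv μt z).toReal + Real.exp (ψ z)) μt :=
    ((h1i.sub h2i).sub hai).add hexp
  have hFval : ∫ z, ((γ.rnDeriv μt z).toReal * Real.log ((γ.rnDeriv μt z).toReal)
        - (γ.rnDeriv μt z).toReal * ψ z - (γ.rnDeriv μt z).toReal + Real.exp (ψ z)) ∂μt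
      = (∫ z, (γ.rnDeriv μt z).toReal * Real.log ((γ.rnDeriv μt z).toReal) ∂μt)
        - (∫ z, (γ.rnDeriv μt z).toReal * ψ z ∂μt) - 1 + ∫ z, Real.exp (ψ z) ∂μt := by
    have e1 : Integrable (fun z => (γ.rnDeriv μt z).toReal * Real.log ((γ.rnDeriv μt z).toReal)
        - (γ.rnDeriv μt z).toReal * ψ z) μt := h1i.sub h2i
    have e2 : Integrable (fun z => (γ.rnDeriv μt z).toReal * Real.log ((γ.rnDeriv μt z).toReal)
        - (γ.rnDeriv μt z).toReal * ψ z - (γ.rnDeriv μt z).toReal) μt := e1.sub hai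
    rw [integral_add e2 hexp, integral_sub e1 hai, integral_sub h1i h2i, haint]
  have hFpos : 0 ≤ ∫ z, ((γ.rnDeriv μt z).toReal * Real.log ((γ.rnDeriv μt z).toReal)
      - (γ.rnDeriv μt z).toReal * ψ z - (γ.rnDeriv μt z).toReal + Real.exp (ψ z)) ∂μt :=
    integral_nonneg hFnn
  constructor
  · rw [h1, h2]
    rw [hFval] at hFpos
    linarith
  · intro heq
    rw [h1, h2] at heq
    have hF0 : ∫ z, ((γ.rnDeriv μt z).toReal * Real.log ((γ.rnDeriv μt z).toReal)
        - (γ.rnDeriv μt z).toReal * ψ z - (γ.rnDeriv μt z).toReal + Real.exp (ψ z)) ∂μt = 0 := by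
      rw [hFval]; linarith
    have hae := (integral_eq_zero_iff_of_nonneg_ae
      (Filter.Eventually.of_forall hFnn) hFi).1 hF0
    filter_upwards [hae, hfin] with z hz hzfin
    simp only [Pi.zero_apply] at hz
    have hkey : (γ.rnDeriv μt z).toReal = Real.exp (ψ z) :=
      key_eq ENNReal.toReal_nonneg (by linarith)
    rw [← hkey, ENNReal.ofReal_toReal hzfin.ne]



lemma coupling_aesm_fst {γ : Measure (X × Y)} (hγ : Coupling ρ₁ ρ₂ γ) {u' : X → ℝ}
    (hui : Integrable u' ρ₁) : AEStronglyMeasurable u' (γ.map Prod.fst) := by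
  rw [hγ.2.1]; exact hui.1

lemma coupling_aesm_snd {γ : Measure (X × Y)} (hγ : Coupling ρ₁ ρ₂ γ) {v' : Y → ℝ}
    (hvi : Integrable v' ρ₂) : AEStronglyMeasurable v' (γ.map Prod.snd) := by
  rw [hγ.2.2]; exact hvi.1

lemma coupling_int_fst {γ : Measure (X × Y)} (hγ : Coupling ρ₁ ρ₂ γ) {u' : X → ℝ}
    (hui : Integrable u' ρ₁) : Integrable (fun p : X × Y => u' p.1) γ := by
  have := (integrable_map_measure (coupling_aesm_fst hγ hui)
    measurable_fst.aemeasurable).1 (by rw [hγ.2.1]; exact hui)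
  exact this

lemma coupling_int_snd {γ : Measure (X × Y)} (hγ : Coupling ρ₁ ρ₂ γ) {v' : Y → ℝ}
    (hvi : Integrable v' ρ₂) : Integrable (fun p : X × Y => v' p.2) γ := by
  have := (integrable_map_measure (coupling_aesm_snd hγ hvi)
    measurable_snd.aemeasurable).1 (by rw [hγ.2.2]; exact hvi)
  exact this

lemma coupling_integrable {γ : Measure (X × Y)} (hγ : Coupling ρ₁ ρ₂ γ) {u' : X → ℝ} {v' : Y → ℝ}
    (hui : Integrable u' ρ₁) (hvi : Integrable v' ρ₂) :
    Integrable (fun p : X × Y => (u' p.1 + v' p.2) / ε) γ :=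
  ((coupling_int_fst hγ hui).add (coupling_int_snd hγ hvi)).div_const ε

lemma coupling_integral {γ : Measure (X × Y)} (hγ : Coupling ρ₁ ρ₂ γ) {u' : X → ℝ} {v' : Y → ℝ}
    (hui : Integrable u' ρ₁) (hvi : Integrable v' ρ₂) :
    ∫ p : X × Y, (u' p.1 + v' p.2) / ε ∂γ = ((∫ x, u' x ∂ρ₁) + ∫ y, v' y ∂ρ₂) / ε := by
  have e1 : ∫ p : X × Y, u' p.1 ∂γ = ∫ x, u' x ∂ρ₁ := by
    conv_rhs => rw [← hγ.2.1]
    exact (integral_map measurable_fst.aemeasurable (coupling_aesm_fst hγ hui)).symm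
  have e2 : ∫ p : X × Y, v' p.2 ∂γ = ∫ y, v' y ∂ρ₂ := by
    conv_rhs => rw [← hγ.2.2]
    exact (integral_map measurable_snd.aemeasurable (coupling_aesm_snd hγ hvi)).symm
  rw [integral_div, integral_add (coupling_int_fst hγ hui) (coupling_int_snd hγ hvi), e1, e2]

lemma w_meas (hε : 0 < ε) (hc : Measurable (Function.uncurry c)) :
    Measurable (fun p : X × Y => ENNReal.ofReal (Real.exp (-c p.1 p.2 / ε))) :=
  ENNReal.measurable_ofReal.comp (Real.measurable_exp.comp (hc.neg.div_const ε))

lemma e_meas (hu : Measurable u) (hv : Measurable v) :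
    Measurable (fun p : X × Y => ENNReal.ofReal (Real.exp ((u p.1 + v p.2) / ε))) :=
  ENNReal.measurable_ofReal.comp (Real.measurable_exp.comp
    (((hu.comp measurable_fst).add (hv.comp measurable_snd)).div_const ε))

lemma h_meas (hc : Measurable (Function.uncurry c)) (hu : Measurable u) (hv : Measurable v) :
    Measurable (fun p : X × Y => ENNReal.ofReal (Real.exp ((u p.1 + v p.2 - c p.1 p.2) / ε))) :=
  ENNReal.measurable_ofReal.comp (Real.measurable_exp.comp
    ((((hu.comp measurable_fst).add (hv.comp measurable_snd)).sub hc).div_const ε))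

lemma gamma_star_decomp (hε : 0 < ε) (hc : Measurable (Function.uncurry c))
    (hu : Measurable u) (hv : Measurable v) :
    (ρ₁.prod ρ₂).withDensity (fun p => ENNReal.ofReal (Real.exp ((u p.1 + v p.2 - c p.1 p.2) / ε)))
      = ((ρ₁.prod ρ₂).withDensity (fun p => ENNReal.ofReal (Real.exp (-c p.1 p.2 / ε)))).withDensity
          (fun p => ENNReal.ofReal (Real.exp ((u p.1 + v p.2) / ε))) := by
  rw [← withDensity_mul _ (w_meas hε hc) (e_meas hu hv)]
  congr 1
  funext p
  rw [Pi.mul_apply, ← ENNReal.ofReal_mul (Real.exp_nonneg _), ← Real.exp_add]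
  congr 2
  field_simp
  ring

lemma integrable_K_iff (hε : 0 < ε) (hc : Measurable (Function.uncurry c)) {φ : X × Y → ℝ} :
    Integrable φ ((ρ₁.prod ρ₂).withDensity
        (fun p => ENNReal.ofReal (Real.exp (-c p.1 p.2 / ε))))
      ↔ Integrable (fun p => Real.exp (-c p.1 p.2 / ε) * φ p) (ρ₁.prod ρ₂) := by
  have hfun : (fun p : X × Y => (ENNReal.ofReal (Real.exp (-c p.1 p.2 / ε))).toReal * φ p)
      = fun p => Real.exp (-c p.1 p.2 / ε) * φ p := by
    funext p
    rw [ENNReal.toReal_ofReal (Real.exp_nonneg _)]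
  rw [integrable_withDensity_toReal (w_meas hε hc).aemeasurable
    (Filter.Eventually.of_forall fun p => ENNReal.ofReal_lt_top), hfun]

lemma integral_K (hε : 0 < ε) (hc : Measurable (Function.uncurry c)) (φ : X × Y → ℝ) :
    ∫ p, φ p ∂((ρ₁.prod ρ₂).withDensity
        (fun p => ENNReal.ofReal (Real.exp (-c p.1 p.2 / ε))))
      = ∫ p, Real.exp (-c p.1 p.2 / ε) * φ p ∂(ρ₁.prod ρ₂) := by
  have hfun : (fun p : X × Y => (ENNReal.ofReal (Real.exp (-c p.1 p.2 / ε))).toReal * φ p)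
      = fun p => Real.exp (-c p.1 p.2 / ε) * φ p := by
    funext p
    rw [ENNReal.toReal_ofReal (Real.exp_nonneg _)]
  rw [integral_withDensity_toReal (w_meas hε hc).aemeasurable
    (Filter.Eventually.of_forall fun p => ENNReal.ofReal_lt_top), hfun]

lemma exp_psi_K_integrable (hε : 0 < ε) (hc : Measurable (Function.uncurry c))
    {u' : X → ℝ} {v' : Y → ℝ}
    (hexp : Integrable (fun p : X × Y =>
      Real.exp ((u' p.1 + v' p.2 - c p.1 p.2) / ε)) (ρ₁.prod ρ₂)) :
    Integrable (fun p : X × Y => Real.exp ((u' p.1 + v' p.2) / ε))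
      ((ρ₁.prod ρ₂).withDensity (fun p => ENNReal.ofReal (Real.exp (-c p.1 p.2 / ε)))) := by
  rw [integrable_K_iff hε hc]
  refine hexp.congr (Filter.Eventually.of_forall fun p => ?_)
  show Real.exp ((u' p.1 + v' p.2 - c p.1 p.2) / ε)
    = Real.exp (-c p.1 p.2 / ε) * Real.exp ((u' p.1 + v' p.2) / ε)
  rw [← Real.exp_add]
  congr 1
  field_simp
  ring

lemma exp_psi_K_integral (hε : 0 < ε) (hc : Measurable (Function.uncurry c))
    {u' : X → ℝ} {v' : Y → ℝ} :
    ∫ p : X × Y, Real.exp ((u' p.1 + v' p.2) / ε)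
        ∂((ρ₁.prod ρ₂).withDensity (fun p => ENNReal.ofReal (Real.exp (-c p.1 p.2 / ε))))
      = ∫ p : X × Y, Real.exp ((u' p.1 + v' p.2 - c p.1 p.2) / ε) ∂(ρ₁.prod ρ₂) := by
  rw [integral_K hε hc]
  refine integral_congr_ae (Filter.Eventually.of_forall fun p => ?_)
  show Real.exp (-c p.1 p.2 / ε) * Real.exp ((u' p.1 + v' p.2) / ε)
    = Real.exp ((u' p.1 + v' p.2 - c p.1 p.2) / ε)
  rw [← Real.exp_add]
  congr 1
  field_simp
  ring



lemma KL_ge_of_coupling (hε : 0 < ε) (hc : Measurable (Function.uncurry c))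
    (hM : ∀ x y, |c x y| ≤ M) {u' : X → ℝ} {v' : Y → ℝ}
    {γ : Measure (X × Y)} (hγ : Coupling ρ₁ ρ₂ γ) :
    Dext ρ₁ ρ₂ c ε u' v' + (ε : EReal)
      ≤ (ε : EReal) * KL γ ((ρ₁.prod ρ₂).withDensity
          (fun p => ENNReal.ofReal (Real.exp (-c p.1 p.2 / ε)))) := by
  haveI : IsProbabilityMeasure γ := hγ.1
  haveI := K_isFiniteMeasure (ρ₁ := ρ₁) (ρ₂ := ρ₂) hε hM
  by_cases hcond : Integrable u' ρ₁ ∧ Integrable v' ρ₂ ∧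
      Integrable (fun p : X × Y => Real.exp ((u' p.1 + v' p.2 - c p.1 p.2) / ε)) (ρ₁.prod ρ₂)
  case neg =>
    rw [Dext_bot hcond, EReal.bot_add]
    exact bot_le
  case pos =>
    rw [Dext_eq hcond]
    unfold KL
    by_cases hKL : γ ≪ ((ρ₁.prod ρ₂).withDensity
          (fun p => ENNReal.ofReal (Real.exp (-c p.1 p.2 / ε)))) ∧
        Integrable (fun z => Real.log ((γ.rnDeriv ((ρ₁.prod ρ₂).withDensity
          (fun p => ENNReal.ofReal (Real.exp (-c p.1 p.2 / ε)))) z).toReal)) γ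
    case neg =>
      rw [if_neg hKL, EReal.coe_mul_top_of_pos hε]
      exact le_top
    case pos =>
      rw [if_pos hKL, ← EReal.coe_mul, ← EReal.coe_add]
      apply EReal.coe_le_coe_iff.2
      have hψγ : Integrable (fun p : X × Y => (u' p.1 + v' p.2) / ε) γ :=
        coupling_integrable hγ hcond.1 hcond.2.1
      have hexpK := exp_psi_K_integrable (ρ₁ := ρ₁) (ρ₂ := ρ₂) hε hc (u' := u') (v' := v')
        hcond.2.2
      have hgb := (gibbs hKL.1 hψγ (by
        refine hexpK.congr (Filter.Eventually.of_forall fun p => rfl)) hKL.2).1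
      rw [coupling_integral hγ hcond.1 hcond.2.1] at hgb
      have hIK := exp_psi_K_integral (ρ₁ := ρ₁) (ρ₂ := ρ₂) hε hc (u' := u') (v' := v')
      rw [hIK] at hgb
      have hmul := mul_le_mul_of_nonneg_left hgb hε.le
      have hdiv : ε * (((∫ x, u' x ∂ρ₁) + ∫ y, v' y ∂ρ₂) / ε)
          = (∫ x, u' x ∂ρ₁) + ∫ y, v' y ∂ρ₂ := by field_simp
      rw [mul_sub, mul_add, hdiv] at hmul
      linarith

lemma KL_gamma_star (hε : 0 < ε) (hc : Measurable (Function.uncurry c))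
    (hM : ∀ x y, |c x y| ≤ M) (hu : Lexp ε ρ₁ u) (hv : Lexp ε ρ₂ v)
    (hui : Integrable u ρ₁) (hvi : Integrable v ρ₂)
    (hP3 : Coupling ρ₁ ρ₂ ((ρ₁.prod ρ₂).withDensity
      (fun p => ENNReal.ofReal (Real.exp ((u p.1 + v p.2 - c p.1 p.2) / ε))))) :
    (ε : EReal) * KL ((ρ₁.prod ρ₂).withDensity
        (fun p => ENNReal.ofReal (Real.exp ((u p.1 + v p.2 - c p.1 p.2) / ε))))
      ((ρ₁.prod ρ₂).withDensity (fun p => ENNReal.ofReal (Real.exp (-c p.1 p.2 / ε))))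
      = ((∫ x, u x ∂ρ₁) + (∫ y, v y ∂ρ₂) : ℝ) := by
  haveI := K_isFiniteMeasure (ρ₁ := ρ₁) (ρ₂ := ρ₂) hε hM
  haveI : IsProbabilityMeasure ((ρ₁.prod ρ₂).withDensity
      (fun p => ENNReal.ofReal (Real.exp ((u p.1 + v p.2 - c p.1 p.2) / ε)))) := hP3.1
  have hdecomp := gamma_star_decomp (ρ₁ := ρ₁) (ρ₂ := ρ₂) hε hc hu.1 hv.1
  have hacK : ((ρ₁.prod ρ₂).withDensity
        (fun p => ENNReal.ofReal (Real.exp ((u p.1 + v p.2 - c p.1 p.2) / ε))))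
      ≪ ((ρ₁.prod ρ₂).withDensity (fun p => ENNReal.ofReal (Real.exp (-c p.1 p.2 / ε)))) := by
    rw [hdecomp]
    exact withDensity_absolutelyContinuous _ _
  have hrn : ((ρ₁.prod ρ₂).withDensity
        (fun p => ENNReal.ofReal (Real.exp ((u p.1 + v p.2 - c p.1 p.2) / ε)))).rnDeriv
        ((ρ₁.prod ρ₂).withDensity (fun p => ENNReal.ofReal (Real.exp (-c p.1 p.2 / ε))))
      =ᵐ[(ρ₁.prod ρ₂).withDensity (fun p => ENNReal.ofReal (Real.exp (-c p.1 p.2 / ε)))]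
        (fun p => ENNReal.ofReal (Real.exp ((u p.1 + v p.2) / ε))) := by
    rw [hdecomp]
    exact Measure.rnDeriv_withDensity _ (e_meas hu.1 hv.1)
  have hrnγ := hacK.ae_le hrn
  have hlogeq : (fun p => Real.log ((((ρ₁.prod ρ₂).withDensity
        (fun p => ENNReal.ofReal (Real.exp ((u p.1 + v p.2 - c p.1 p.2) / ε)))).rnDeriv
        ((ρ₁.prod ρ₂).withDensity (fun p => ENNReal.ofReal (Real.exp (-c p.1 p.2 / ε)))) p).toReal))
      =ᵐ[(ρ₁.prod ρ₂).withDensity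
        (fun p => ENNReal.ofReal (Real.exp ((u p.1 + v p.2 - c p.1 p.2) / ε)))]
      (fun p => (u p.1 + v p.2) / ε) := by
    filter_upwards [hrnγ] with p hp
    rw [hp, ENNReal.toReal_ofReal (Real.exp_nonneg _), Real.log_exp]
  have hψγ : Integrable (fun p : X × Y => (u p.1 + v p.2) / ε)
      ((ρ₁.prod ρ₂).withDensity
        (fun p => ENNReal.ofReal (Real.exp ((u p.1 + v p.2 - c p.1 p.2) / ε)))) :=
    coupling_integrable hP3 hui hvi
  have hlogint := hψγ.congr hlogeq.symm
  unfold KL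
  rw [if_pos ⟨hacK, hlogint⟩, integral_congr_ae hlogeq, coupling_integral hP3 hui hvi,
    ← EReal.coe_mul]
  congr 1
  field_simp

lemma KL_min (hε : 0 < ε) (hc : Measurable (Function.uncurry c))
    (hM : ∀ x y, |c x y| ≤ M) (hu : Lexp ε ρ₁ u) (hv : Lexp ε ρ₂ v)
    (hui : Integrable u ρ₁) (hvi : Integrable v ρ₂)
    (hP3 : Coupling ρ₁ ρ₂ ((ρ₁.prod ρ₂).withDensity
      (fun p => ENNReal.ofReal (Real.exp ((u p.1 + v p.2 - c p.1 p.2) / ε)))))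
    {γ : Measure (X × Y)} (hγ : Coupling ρ₁ ρ₂ γ) :
    (((∫ x, u x ∂ρ₁) + (∫ y, v y ∂ρ₂) : ℝ) : EReal)
        ≤ (ε : EReal) * KL γ ((ρ₁.prod ρ₂).withDensity
            (fun p => ENNReal.ofReal (Real.exp (-c p.1 p.2 / ε))))
    ∧ ((ε : EReal) * KL γ ((ρ₁.prod ρ₂).withDensity
            (fun p => ENNReal.ofReal (Real.exp (-c p.1 p.2 / ε))))
          = (((∫ x, u x ∂ρ₁) + (∫ y, v y ∂ρ₂) : ℝ) : EReal)
        → γ = (ρ₁.prod ρ₂).withDensity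
            (fun p => ENNReal.ofReal (Real.exp ((u p.1 + v p.2 - c p.1 p.2) / ε)))) := by
  haveI : IsProbabilityMeasure γ := hγ.1
  haveI := K_isFiniteMeasure (ρ₁ := ρ₁) (ρ₂ := ρ₂) hε hM
  have hexpμ : Integrable (fun p : X × Y =>
      Real.exp ((u p.1 + v p.2 - c p.1 p.2) / ε)) (ρ₁.prod ρ₂) :=
    prod_exp_integrable hε hc hM hu hv
  have hIone : ∫ p : X × Y, Real.exp ((u p.1 + v p.2 - c p.1 p.2) / ε) ∂(ρ₁.prod ρ₂) = 1 := by
    have huniv : ((ρ₁.prod ρ₂).withDensity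
        (fun p => ENNReal.ofReal (Real.exp ((u p.1 + v p.2 - c p.1 p.2) / ε)))) Set.univ = 1 :=
      hP3.1.measure_univ
    rw [withDensity_apply _ MeasurableSet.univ, Measure.restrict_univ,
      ← ofReal_integral_eq_lintegral_ofReal hexpμ
        (Filter.Eventually.of_forall fun p => Real.exp_nonneg _)] at huniv
    exact ENNReal.ofReal_eq_one.1 huniv
  have hψγ : Integrable (fun p : X × Y => (u p.1 + v p.2) / ε) γ :=
    coupling_integrable hγ hui hvi
  have hexpK := exp_psi_K_integrable (ρ₁ := ρ₁) (ρ₂ := ρ₂) hε hc (u' := u) (v' := v) hexpμ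
  have hIK := exp_psi_K_integral (ρ₁ := ρ₁) (ρ₂ := ρ₂) hε hc (u' := u) (v' := v)
  rw [hIone] at hIK
  unfold KL
  by_cases hKL : γ ≪ ((ρ₁.prod ρ₂).withDensity
        (fun p => ENNReal.ofReal (Real.exp (-c p.1 p.2 / ε)))) ∧
      Integrable (fun z => Real.log ((γ.rnDeriv ((ρ₁.prod ρ₂).withDensity
        (fun p => ENNReal.ofReal (Real.exp (-c p.1 p.2 / ε)))) z).toReal)) γ
  case neg =>
    rw [if_neg hKL, EReal.coe_mul_top_of_pos hε]
    exact ⟨le_top, fun habs => absurd habs.symm (EReal.coe_ne_top _)⟩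
  case pos =>
    rw [if_pos hKL, ← EReal.coe_mul]
    have hgb := gibbs hKL.1 hψγ hexpK hKL.2
    have h1 := hgb.1
    rw [coupling_integral hγ hui hvi, hIK] at h1
    constructor
    · apply EReal.coe_le_coe_iff.2
      have hmul := mul_le_mul_of_nonneg_left h1 hε.le
      have hdiv : ε * (((∫ x, u x ∂ρ₁) + ∫ y, v y ∂ρ₂) / ε)
          = (∫ x, u x ∂ρ₁) + ∫ y, v y ∂ρ₂ := by field_simp
      rw [mul_sub, mul_add, hdiv] at hmul
      linarith
    · intro heq
      have heqr := EReal.coe_eq_coe_iff.1 heq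
      have hreq : ∫ z, Real.log ((γ.rnDeriv ((ρ₁.prod ρ₂).withDensity
          (fun p => ENNReal.ofReal (Real.exp (-c p.1 p.2 / ε)))) z).toReal) ∂γ
          = (∫ p : X × Y, (u p.1 + v p.2) / ε ∂γ) + 1
            - ∫ p : X × Y, Real.exp ((u p.1 + v p.2) / ε)
                ∂((ρ₁.prod ρ₂).withDensity
                  (fun p => ENNReal.ofReal (Real.exp (-c p.1 p.2 / ε)))) := by
        rw [coupling_integral hγ hui hvi, hIK]
        have hεne : ε ≠ 0 := hε.ne'
        field_simp at heqr ⊢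
        linarith [heqr]
      have hfae := hgb.2 hreq
      have hwd := (Measure.withDensity_rnDeriv_eq γ _ hKL.1).symm
      rw [hwd, withDensity_congr_ae hfae,
        ← gamma_star_decomp (ρ₁ := ρ₁) (ρ₂ := ρ₂) hε hc hu.1 hv.1]



lemma gamma_star_snd (hε : 0 < ε) (hc : Measurable (Function.uncurry c))
    (hM : ∀ x y, |c x y| ≤ M) (hu : Lexp ε ρ₁ u) (hv : Lexp ε ρ₂ v) :
    ((ρ₁.prod ρ₂).withDensity
        (fun p => ENNReal.ofReal (Real.exp ((u p.1 + v p.2 - c p.1 p.2) / ε)))).map Prod.snd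
      = ρ₂.withDensity fun y => ENNReal.ofReal (Real.exp ((v y - transform ρ₁ c ε u y) / ε)) := by
  rw [map_snd_withDensity (h_meas hc hu.1 hv.1)]
  exact withDensity_congr_ae
    (Filter.Eventually.of_forall fun y => lintegral_inner_snd hε hc hM hu y)

lemma gamma_star_fst (hε : 0 < ε) (hc : Measurable (Function.uncurry c))
    (hM : ∀ x y, |c x y| ≤ M) (hu : Lexp ε ρ₁ u) (hv : Lexp ε ρ₂ v) :
    ((ρ₁.prod ρ₂).withDensity
        (fun p => ENNReal.ofReal (Real.exp ((u p.1 + v p.2 - c p.1 p.2) / ε)))).map Prod.fst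
      = ρ₁.withDensity fun x => ENNReal.ofReal (Real.exp ((u x - transformY ρ₂ c ε v x) / ε)) := by
  rw [map_fst_withDensity (h_meas hc hu.1 hv.1)]
  refine withDensity_congr_ae (Filter.Eventually.of_forall fun x => ?_)
  show ∫⁻ y, ENNReal.ofReal (Real.exp ((u x + v y - c x y) / ε)) ∂ρ₂
    = ENNReal.ofReal (Real.exp ((u x - transformY ρ₂ c ε v x) / ε))
  have h := lintegral_inner_snd (ρ₁ := ρ₂) (c := fun y x => c x y) (u := v) (v := u) hε
    (measurable_uncurry_flip hc) (fun y x => hM x y) hv x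
  rw [transformY_eq, ← h]
  refine lintegral_congr fun y => ?_
  congr 2
  ring

lemma P2_implies_P3 (hε : 0 < ε) (hc : Measurable (Function.uncurry c))
    (hM : ∀ x y, |c x y| ≤ M) (hu : Lexp ε ρ₁ u) (hv : Lexp ε ρ₂ v)
    (h2 : v =ᵐ[ρ₂] transform ρ₁ c ε u ∧ u =ᵐ[ρ₁] transformY ρ₂ c ε v) :
    Coupling ρ₁ ρ₂ ((ρ₁.prod ρ₂).withDensity
      (fun p => ENNReal.ofReal (Real.exp ((u p.1 + v p.2 - c p.1 p.2) / ε)))) := by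
  have hsnd : ((ρ₁.prod ρ₂).withDensity
      (fun p => ENNReal.ofReal (Real.exp ((u p.1 + v p.2 - c p.1 p.2) / ε)))).map Prod.snd
      = ρ₂ := by
    rw [gamma_star_snd hε hc hM hu hv]
    have hone : (fun y => ENNReal.ofReal (Real.exp ((v y - transform ρ₁ c ε u y) / ε)))
        =ᵐ[ρ₂] 1 := by
      filter_upwards [h2.1] with y hy
      rw [hy]
      simp
    rw [withDensity_congr_ae hone, withDensity_one]
  have hfst : ((ρ₁.prod ρ₂).withDensity
      (fun p => ENNReal.ofReal (Real.exp ((u p.1 + v p.2 - c p.1 p.2) / ε)))).map Prod.fst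
      = ρ₁ := by
    rw [gamma_star_fst hε hc hM hu hv]
    have hone : (fun x => ENNReal.ofReal (Real.exp ((u x - transformY ρ₂ c ε v x) / ε)))
        =ᵐ[ρ₁] 1 := by
      filter_upwards [h2.2] with x hx
      rw [hx]
      simp
    rw [withDensity_congr_ae hone, withDensity_one]
  refine ⟨⟨?_⟩, hfst, hsnd⟩
  have huniv : (((ρ₁.prod ρ₂).withDensity
      (fun p => ENNReal.ofReal (Real.exp ((u p.1 + v p.2 - c p.1 p.2) / ε)))).map Prod.snd)
      Set.univ = 1 := by
    rw [hsnd]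
    exact measure_univ
  rwa [Measure.map_apply measurable_snd MeasurableSet.univ, Set.preimage_univ] at huniv

lemma P3_implies_P2 (hε : 0 < ε) (hc : Measurable (Function.uncurry c))
    (hM : ∀ x y, |c x y| ≤ M) (hu : Lexp ε ρ₁ u) (hv : Lexp ε ρ₂ v)
    (h3 : Coupling ρ₁ ρ₂ ((ρ₁.prod ρ₂).withDensity
      (fun p => ENNReal.ofReal (Real.exp ((u p.1 + v p.2 - c p.1 p.2) / ε))))) :
    v =ᵐ[ρ₂] transform ρ₁ c ε u ∧ u =ᵐ[ρ₁] transformY ρ₂ c ε v := by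
  constructor
  · have hsnd := h3.2.2
    rw [gamma_star_snd hε hc hM hu hv] at hsnd
    have hone := withDensity_eq_self (ENNReal.measurable_ofReal.comp (Real.measurable_exp.comp
      ((hv.1.sub (transform_measurable hu.1 hc)).div_const ε))) hsnd
    filter_upwards [hone] with y hy
    simp only [Pi.one_apply] at hy
    have h1 : Real.exp ((v y - transform ρ₁ c ε u y) / ε) = 1 := ENNReal.ofReal_eq_one.1 hy
    have h2 := (Real.exp_eq_one_iff _).1 h1
    rw [div_eq_zero_iff] at h2
    rcases h2 with h2 | h2
    · linarith
    · exact absurd h2 hε.ne'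
  · have hfst := h3.2.1
    rw [gamma_star_fst hε hc hM hu hv] at hfst
    have hone := withDensity_eq_self (ENNReal.measurable_ofReal.comp (Real.measurable_exp.comp
      ((hu.1.sub (transform_measurable hv.1 (measurable_uncurry_flip hc))).div_const ε))) hfst
    filter_upwards [hone] with x hx
    simp only [Pi.one_apply] at hx
    have h1 : Real.exp ((u x - transformY ρ₂ c ε v x) / ε) = 1 := ENNReal.ofReal_eq_one.1 hx
    have h2 := (Real.exp_eq_one_iff _).1 h1
    rw [div_eq_zero_iff] at h2
    rcases h2 with h2 | h2
    · linarith
    · exact absurd h2 hε.ne'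

lemma P2_integrable (hε : 0 < ε) (hc : Measurable (Function.uncurry c))
    (hM : ∀ x y, |c x y| ≤ M) (hu : Lexp ε ρ₁ u) (hv : Lexp ε ρ₂ v)
    (h2 : v =ᵐ[ρ₂] transform ρ₁ c ε u ∧ u =ᵐ[ρ₁] transformY ρ₂ c ε v) :
    Integrable u ρ₁ ∧ Integrable v ρ₂ :=
  ⟨(transform_integrable (ρ₁ := ρ₂) (ρ₂ := ρ₁) (c := fun y x => c x y) hε
      (measurable_uncurry_flip hc) (fun y x => hM x y) hv).congr h2.2.symm,
    (transform_integrable hε hc hM hu).congr h2.1.symm⟩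

lemma lexp_zero {Z : Type*} [MeasurableSpace Z] {ρ : Measure Z} [IsProbabilityMeasure ρ] :
    Lexp ε ρ (fun _ => (0 : ℝ)) := by
  refine ⟨measurable_const, ?_, ?_⟩
  · simp only [zero_div, Real.exp_zero]
    exact integrable_const 1
  · simp only [zero_div, Real.exp_zero, integral_const, measure_univ, ENNReal.toReal_one,
      smul_eq_mul, mul_one]
    norm_num

lemma Dext_zero_eq (hε : 0 < ε) (hc : Measurable (Function.uncurry c))
    (hM : ∀ x y, |c x y| ≤ M) :
    Dext ρ₁ ρ₂ c ε (fun _ => (0 : ℝ)) (fun _ => (0 : ℝ))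
      = ((0 + 0 - ε * ∫ p : X × Y, Real.exp ((0 + 0 - c p.1 p.2) / ε)
          ∂(ρ₁.prod ρ₂) : ℝ) : EReal) := by
  have hint : Integrable (fun p : X × Y => Real.exp ((0 + 0 - c p.1 p.2) / ε)) (ρ₁.prod ρ₂) := by
    refine Integrable.mono' (integrable_const (Real.exp (M / ε)))
      ((Real.measurable_exp.comp ((((measurable_const (a := (0:ℝ))).add
        (measurable_const (a := (0:ℝ)))).sub hc).div_const ε))).aestronglyMeasurable
      (Filter.Eventually.of_forall fun p => ?_)
    rw [Real.norm_eq_abs, abs_of_nonneg (Real.exp_nonneg _)]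
    apply Real.exp_le_exp.2
    rw [div_le_div_iff_of_pos_right hε]
    have := (abs_le.1 (hM p.1 p.2)).1
    linarith
  rw [Dext_eq ⟨integrable_const 0, integrable_const 0, hint⟩]
  simp

lemma exp_h_integral_one (hε : 0 < ε) (hc : Measurable (Function.uncurry c))
    (hM : ∀ x y, |c x y| ≤ M) (hu : Lexp ε ρ₁ u) (hv : Lexp ε ρ₂ v)
    (hP3 : Coupling ρ₁ ρ₂ ((ρ₁.prod ρ₂).withDensity
      (fun p => ENNReal.ofReal (Real.exp ((u p.1 + v p.2 - c p.1 p.2) / ε))))) :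
    ∫ p : X × Y, Real.exp ((u p.1 + v p.2 - c p.1 p.2) / ε) ∂(ρ₁.prod ρ₂) = 1 := by
  have hexpμ := prod_exp_integrable hε hc hM hu hv
  have huniv : ((ρ₁.prod ρ₂).withDensity
      (fun p => ENNReal.ofReal (Real.exp ((u p.1 + v p.2 - c p.1 p.2) / ε)))) Set.univ = 1 :=
    hP3.1.measure_univ
  rw [withDensity_apply _ MeasurableSet.univ, Measure.restrict_univ,
    ← ofReal_integral_eq_lintegral_ofReal hexpμ
      (Filter.Eventually.of_forall fun p => Real.exp_nonneg _)] at huniv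
  exact ENNReal.ofReal_eq_one.1 huniv


end MainAux

theorem equivalence_and_complementarity
    {X Y : Type*}
    [MeasurableSpace X] [TopologicalSpace X] [PolishSpace X] [BorelSpace X]
    [MeasurableSpace Y] [TopologicalSpace Y] [PolishSpace Y] [BorelSpace Y]
    (ρ₁ : Measure X) [IsProbabilityMeasure ρ₁]
    (ρ₂ : Measure Y) [IsProbabilityMeasure ρ₂]
    (ε : ℝ) (hε : 0 < ε)
    (c : X → Y → ℝ) (hc : Measurable (Function.uncurry c))
    (M : ℝ) (hM : ∀ x y, |c x y| ≤ M)
    (u v : _) (hu : Lexp ε ρ₁ u) (hv : Lexp ε ρ₂ v) :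
    -- the Gibbs kernel
    let K : Measure (X × Y) := (ρ₁.prod ρ₂).withDensity
      (fun p => ENNReal.ofReal (Real.exp (-c p.1 p.2 / ε)))
    -- the candidate optimal plan
    let γstar : Measure (X × Y) := (ρ₁.prod ρ₂).withDensity
      (fun p => ENNReal.ofReal (Real.exp ((u p.1 + v p.2 - c p.1 p.2) / ε)))
    -- the entropic optimal transport value
    let OTval : EReal :=
      ⨅ γ : {γ : Measure (X × Y) // Coupling ρ₁ ρ₂ γ}, (ε : EReal) * KL γ.1 K
    -- (1) maximizers
    let P1 : Prop := ∀ (u' : X → ℝ) (v' : Y → ℝ), Lexp ε ρ₁ u' → Lexp ε ρ₂ v' →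
      Dext ρ₁ ρ₂ c ε u' v' ≤ Dext ρ₁ ρ₂ c ε u v
    -- (2) maximality condition
    let P2 : Prop := v =ᵐ[ρ₂] transform ρ₁ c ε u ∧ u =ᵐ[ρ₁] transformY ρ₂ c ε v
    -- (3) Schrödinger system
    let P3 : Prop := Coupling ρ₁ ρ₂ γstar
    -- (4) duality attainment
    let P4 : Prop := OTval = Dext ρ₁ ρ₂ c ε u v + (ε : EReal)
    ((P1 ↔ P2) ∧ (P2 ↔ P3) ∧ (P3 ↔ P4)) ∧
    (P1 → ∀ γ : Measure (X × Y), Coupling ρ₁ ρ₂ γ →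
      ((ε : EReal) * KL γstar K ≤ (ε : EReal) * KL γ K ∧
       ((ε : EReal) * KL γ K = (ε : EReal) * KL γstar K → γ = γstar))) := by
  intro K γstar OTval P1 P2 P3 P4
  have h23f : P2 → P3 := fun h2 => P2_implies_P3 hε hc hM hu hv h2
  have h32 : P3 → P2 := fun h3 => P3_implies_P2 hε hc hM hu hv h3
  have h12 : P1 → P2 := by
    intro h1
    have hzero := h1 (fun _ => (0:ℝ)) (fun _ => (0:ℝ)) lexp_zero lexp_zero
    rw [Dext_zero_eq hε hc hM] at hzero
    have hne : Dext ρ₁ ρ₂ c ε u v ≠ ⊥ := by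
      intro hb
      rw [hb] at hzero
      exact (EReal.coe_ne_bot _) (le_bot_iff.1 hzero)
    have hcond : Integrable u ρ₁ ∧ Integrable v ρ₂ ∧
        Integrable (fun p : X × Y => Real.exp ((u p.1 + v p.2 - c p.1 p.2) / ε)) (ρ₁.prod ρ₂) := by
      by_contra h
      exact hne (Dext_bot h)
    have hveq : v =ᵐ[ρ₂] transform ρ₁ c ε u := by
      have hP1T := h1 u (transform ρ₁ c ε u) hu (transform_lexp hε hc hM hu)
      have hSI := sinkhorn_improve hε hc hM hu hcond.1 hv
      exact hSI.2 (le_antisymm hSI.1 hP1T)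
    have hueq : u =ᵐ[ρ₁] transformY ρ₂ c ε v := by
      have hTlex : Lexp ε ρ₁ (transformY ρ₂ c ε v) :=
        transform_lexp (ρ₁ := ρ₂) (ρ₂ := ρ₁) (c := fun y x => c x y) hε
          (measurable_uncurry_flip hc) (fun y x => hM x y) hv
      have hP1T := h1 (transformY ρ₂ c ε v) v hTlex hv
      have hSI := sinkhorn_improve (ρ₁ := ρ₂) (ρ₂ := ρ₁) (c := fun y x => c x y) hε
        (measurable_uncurry_flip hc) (fun y x => hM x y) hv hcond.2.1 hu
      refine hSI.2 (le_antisymm hSI.1 ?_)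
      calc Dext ρ₂ ρ₁ (fun y x => c x y) ε v (transform ρ₂ (fun y x => c x y) ε v)
          = Dext ρ₁ ρ₂ c ε (transformY ρ₂ c ε v) v := by
            rw [transformY_eq]
            exact Dext_symm.symm
        _ ≤ Dext ρ₁ ρ₂ c ε u v := hP1T
        _ = Dext ρ₂ ρ₁ (fun y x => c x y) ε v u := Dext_symm
    exact ⟨hveq, hueq⟩
  have h31 : P3 → P1 := by
    intro h3 u' v' hu' hv'
    have h2 := h32 h3
    obtain ⟨hui, hvi⟩ := P2_integrable hε hc hM hu hv h2
    have hDuv : Dext ρ₁ ρ₂ c ε u v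
        = (((∫ x, u x ∂ρ₁) + (∫ y, v y ∂ρ₂) - ε : ℝ) : EReal) := by
      rw [Dext_eq ⟨hui, hvi, prod_exp_integrable hε hc hM hu hv⟩,
        exp_h_integral_one hε hc hM hu hv h3, mul_one]
    have hchain : Dext ρ₁ ρ₂ c ε u' v' + (ε : EReal) ≤ Dext ρ₁ ρ₂ c ε u v + (ε : EReal) := by
      calc Dext ρ₁ ρ₂ c ε u' v' + (ε : EReal)
          ≤ (ε : EReal) * KL γstar K := KL_ge_of_coupling hε hc hM h3
        _ = (((∫ x, u x ∂ρ₁) + (∫ y, v y ∂ρ₂) : ℝ) : EReal) :=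
            KL_gamma_star hε hc hM hu hv hui hvi h3
        _ = Dext ρ₁ ρ₂ c ε u v + (ε : EReal) := by
            rw [hDuv, ← EReal.coe_add]
            congr 1
            ring
    exact (EReal.addLECancellable_coe ε).add_le_add_iff_right.1 hchain
  have h34 : P3 → P4 := by
    intro h3
    have h2 := h32 h3
    obtain ⟨hui, hvi⟩ := P2_integrable hε hc hM hu hv h2
    have hstar : (ε : EReal) * KL γstar K = (((∫ x, u x ∂ρ₁) + (∫ y, v y ∂ρ₂) : ℝ) : EReal) :=
      KL_gamma_star hε hc hM hu hv hui hvi h3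
    have hOT : OTval = (((∫ x, u x ∂ρ₁) + (∫ y, v y ∂ρ₂) : ℝ) : EReal) := by
      apply le_antisymm
      · calc OTval ≤ (ε : EReal) * KL γstar K :=
            iInf_le _ (⟨γstar, h3⟩ : {γ : Measure (X × Y) // Coupling ρ₁ ρ₂ γ})
          _ = _ := hstar
      · exact le_iInf fun γ => (KL_min hε hc hM hu hv hui hvi h3 γ.2).1
    show OTval = Dext ρ₁ ρ₂ c ε u v + (ε : EReal)
    rw [hOT, Dext_eq ⟨hui, hvi, prod_exp_integrable hε hc hM hu hv⟩,
      exp_h_integral_one hε hc hM hu hv h3, mul_one, ← EReal.coe_add]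
    congr 1
    ring
  have h43 : P4 → P3 := by
    intro h4
    have hlow : ∀ (u' : X → ℝ) (v' : Y → ℝ),
        Dext ρ₁ ρ₂ c ε u' v' + (ε : EReal) ≤ OTval := fun u' v' =>
      le_iInf fun γ => KL_ge_of_coupling hε hc hM γ.2
    have hne : Dext ρ₁ ρ₂ c ε u v ≠ ⊥ := by
      intro hb
      have hz := hlow (fun _ => (0:ℝ)) (fun _ => (0:ℝ))
      rw [h4, hb, EReal.bot_add, Dext_zero_eq hε hc hM, ← EReal.coe_add] at hz
      exact (EReal.coe_ne_bot _) (le_bot_iff.1 hz)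
    have hcond : Integrable u ρ₁ ∧ Integrable v ρ₂ ∧
        Integrable (fun p : X × Y => Real.exp ((u p.1 + v p.2 - c p.1 p.2) / ε)) (ρ₁.prod ρ₂) := by
      by_contra h
      exact hne (Dext_bot h)
    have hveq : v =ᵐ[ρ₂] transform ρ₁ c ε u := by
      have hT := hlow u (transform ρ₁ c ε u)
      rw [h4] at hT
      have hle : Dext ρ₁ ρ₂ c ε u (transform ρ₁ c ε u) ≤ Dext ρ₁ ρ₂ c ε u v :=
        (EReal.addLECancellable_coe ε).add_le_add_iff_right.1 hT
      have hSI := sinkhorn_improve hε hc hM hu hcond.1 hv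
      exact hSI.2 (le_antisymm hSI.1 hle)
    have hueq : u =ᵐ[ρ₁] transformY ρ₂ c ε v := by
      have hT := hlow (transformY ρ₂ c ε v) v
      rw [h4] at hT
      have hle0 : Dext ρ₁ ρ₂ c ε (transformY ρ₂ c ε v) v ≤ Dext ρ₁ ρ₂ c ε u v :=
        (EReal.addLECancellable_coe ε).add_le_add_iff_right.1 hT
      have hSI := sinkhorn_improve (ρ₁ := ρ₂) (ρ₂ := ρ₁) (c := fun y x => c x y) hε
        (measurable_uncurry_flip hc) (fun y x => hM x y) hv hcond.2.1 hu
      refine hSI.2 (le_antisymm hSI.1 ?_)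
      calc Dext ρ₂ ρ₁ (fun y x => c x y) ε v (transform ρ₂ (fun y x => c x y) ε v)
          = Dext ρ₁ ρ₂ c ε (transformY ρ₂ c ε v) v := by
            rw [transformY_eq]
            exact Dext_symm.symm
        _ ≤ Dext ρ₁ ρ₂ c ε u v := hle0
        _ = Dext ρ₂ ρ₁ (fun y x => c x y) ε v u := Dext_symm
    exact h23f ⟨hveq, hueq⟩
  have hfinal : P1 → ∀ γ : Measure (X × Y), Coupling ρ₁ ρ₂ γ →
      ((ε : EReal) * KL γstar K ≤ (ε : EReal) * KL γ K ∧
       ((ε : EReal) * KL γ K = (ε : EReal) * KL γstar K → γ = γstar)) := by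
    intro h1 γ hγ
    have h2 := h12 h1
    have h3 := h23f h2
    obtain ⟨hui, hvi⟩ := P2_integrable hε hc hM hu hv h2
    have hstar : (ε : EReal) * KL γstar K = (((∫ x, u x ∂ρ₁) + (∫ y, v y ∂ρ₂) : ℝ) : EReal) :=
      KL_gamma_star hε hc hM hu hv hui hvi h3
    have hmin := KL_min hε hc hM hu hv hui hvi h3 hγ
    constructor
    · rw [hstar]
      exact hmin.1
    · intro heq
      rw [hstar] at heq
      exact hmin.2 heq
  exact ⟨⟨⟨h12, fun h2 => h31 (h23f h2)⟩, ⟨h23f, h32⟩, ⟨h34, h43⟩⟩, hfinal⟩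

end
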